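/- For all t with 0 < t < π/2, the inequality t·cot(t) − 1 > −t²/2 holds; and for all t > 0, the inequality t·coth(t) − 1 < t²/3 holds. -/

import Mathlib

open Real

private lemma aux1 : ∀ t : ℝ, 0 < t → t < Real.pi / 2 →
    0 < t * Real.cos t + (t ^ 2 / 2 - 1) * Real.sin t := by
  intro t ht ht2
  set f : ℝ → ℝ := fun t => t * Real.cos t + (t ^ 2 / 2 - 1) * Real.sin t with hf
  have hder : ∀ x : ℝ, HasDerivAt f (x ^ 2 / 2 * Real.cos x) x := by
    intro x
    have h1 := (hasDerivAt_id x).mul (Real.hasDerivAt_cos x)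
    have h2 := (((hasDerivAt_pow 2 x).div_const 2).sub_const 1).mul (Real.hasDerivAt_sin x)
    convert h1.add h2 using 1
    case e'_9 => simp [id_eq]; ring
    all_goals rfl
  have hmono : StrictMonoOn f (Set.Icc 0 (Real.pi / 2)) := by
    apply strictMonoOn_of_deriv_pos (convex_Icc _ _)
    · exact fun x _ => ((hder x).continuousAt).continuousWithinAt
    · intro x hx
      rw [interior_Icc] at hx
      rw [(hder x).deriv]
      have hc : 0 < Real.cos x :=
        Real.cos_pos_of_mem_Ioo ⟨by linarith [hx.1, Real.pi_pos], hx.2⟩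
      have hx2 : 0 < x ^ 2 / 2 := by nlinarith [hx.1]
      exact mul_pos hx2 hc
  have h0 : f 0 = 0 := by simp [hf]
  have := hmono (Set.mem_Icc.2 ⟨le_refl 0, by positivity⟩)
    (Set.mem_Icc.2 ⟨ht.le, ht2.le⟩) ht
  rw [h0] at this
  exact this

private lemma aux2 : ∀ t : ℝ, 0 < t → Real.sinh t < t * Real.cosh t := by
  intro t ht
  set f : ℝ → ℝ := fun t => t * Real.cosh t - Real.sinh t with hf
  have hder : ∀ x : ℝ, HasDerivAt f (x * Real.sinh x) x := by
    intro x
    have h1 := ((hasDerivAt_id x).mul (Real.hasDerivAt_cosh x)).sub (Real.hasDerivAt_sinh x)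
    convert h1 using 1
    case e'_9 => simp [id_eq, mul_comm]
    all_goals rfl
  have hmono : StrictMonoOn f (Set.Ici 0) := by
    apply strictMonoOn_of_deriv_pos (convex_Ici _)
    · exact fun x _ => ((hder x).continuousAt).continuousWithinAt
    · intro x hx
      rw [interior_Ici] at hx
      rw [(hder x).deriv]
      exact mul_pos hx (Real.sinh_pos_iff.2 hx)
  have h0 : f 0 = 0 := by simp [hf]
  have := hmono (Set.mem_Ici.2 le_rfl) (Set.mem_Ici.2 ht.le) ht
  rw [h0] at this
  simp only [hf] at this
  linarith

private lemma aux3 : ∀ t : ℝ, 0 < t →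
    t * Real.cosh t < (1 + t ^ 2 / 3) * Real.sinh t := by
  intro t ht
  set f : ℝ → ℝ := fun t => (1 + t ^ 2 / 3) * Real.sinh t - t * Real.cosh t with hf
  have hder : ∀ x : ℝ, HasDerivAt f (x / 3 * (x * Real.cosh x - Real.sinh x)) x := by
    intro x
    have h1 := ((((hasDerivAt_pow 2 x).div_const 3).const_add 1).mul
      (Real.hasDerivAt_sinh x)).sub ((hasDerivAt_id x).mul (Real.hasDerivAt_cosh x))
    convert h1 using 1
    case e'_9 => simp [id_eq]; ring
    all_goals rfl
  have hmono : StrictMonoOn f (Set.Ici 0) := by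
    apply strictMonoOn_of_deriv_pos (convex_Ici _)
    · exact fun x _ => ((hder x).continuousAt).continuousWithinAt
    · intro x hx
      rw [interior_Ici] at hx
      rw [(hder x).deriv]
      rw [Set.mem_Ioi] at hx
      have := aux2 x hx
      have h3 : 0 < x / 3 := by linarith
      exact mul_pos h3 (by linarith)
  have h0 : f 0 = 0 := by simp [hf]
  have := hmono (Set.mem_Ici.2 le_rfl) (Set.mem_Ici.2 ht.le) ht
  rw [h0] at this
  simp only [hf] at this
  linarith

/-- For `0 < t < π/2` one has `t·cot t − 1 > −t²/2`, and for `t > 0` one has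
`t·coth t − 1 < t²/3`. -/
theorem stmt3 :
    (∀ t : ℝ, 0 < t → t < Real.pi / 2 →
      t * (Real.cos t / Real.sin t) - 1 > -t ^ 2 / 2) ∧
    (∀ t : ℝ, 0 < t →
      t * (Real.cosh t / Real.sinh t) - 1 < t ^ 2 / 3) := by
  constructor
  · intro t ht ht2
    have hs : 0 < Real.sin t :=
      Real.sin_pos_of_pos_of_lt_pi ht (by linarith [Real.pi_pos])
    have h := aux1 t ht ht2
    rw [gt_iff_lt, show t * (Real.cos t / Real.sin t) - 1
      = (t * Real.cos t - Real.sin t) / Real.sin t by field_simp, lt_div_iff₀ hs]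
    nlinarith
  · intro t ht
    have hs : 0 < Real.sinh t := Real.sinh_pos_iff.2 ht
    have h := aux3 t ht
    rw [show t * (Real.cosh t / Real.sinh t) - 1
      = (t * Real.cosh t - Real.sinh t) / Real.sinh t by field_simp, div_lt_iff₀ hs]
    nlinarith
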